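/- Let r ≥ 1 be an integer and h ∈ {0,1}, and define A_{r,g}(z) = Σ_{m=0}^{r} C(r−g+1/4, m)·C(2r−g−m, r−g)·(−z)^m and B_{r,g}(z) = Σ_{m=0}^{r−g} C(r−1/4, m)·C(2r−g−m, r)·(−z)^m for g ∈ {0,1}, where C(α, m) = α(α−1)⋯(α−m+1)/m! is the generalized binomial coefficient and C(n, k) the ordinary one. Then for all complex numbers z ≠ 0: A_{r,0}(z)·B_{r+h,1}(z) ≠ A_{r+h,1}(z)·B_{r,0}(z). -/

import Mathlib

open Finset

/-- The generalized binomial coefficient `C(α, m) = α(α-1)⋯(α-m+1)/m!`. -/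
noncomputable def gchoose (α : ℝ) (m : ℕ) : ℝ :=
  (∏ i ∈ Finset.range m, (α - i)) / (m.factorial : ℝ)

/-- The Padé approximation polynomial `A_{r,g}(z)`. -/
noncomputable def padeA (r g : ℕ) (z : ℂ) : ℂ :=
  ∑ m ∈ Finset.range (r + 1),
    ((gchoose ((r:ℝ) - (g:ℝ) + 1/4) m * ((2*r - g - m).choose (r - g) : ℝ) : ℝ) : ℂ)
      * (-z)^m

/-- The Padé approximation polynomial `B_{r,g}(z)`. -/
noncomputable def padeB (r g : ℕ) (z : ℂ) : ℂ :=
  ∑ m ∈ Finset.range (r - g + 1),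
    ((gchoose ((r:ℝ) - 1/4) m * ((2*r - g - m).choose r : ℝ) : ℝ) : ℂ)
      * (-z)^m

/-! ### Auxiliary lemmas -/

lemma gchoose_zero' (α : ℝ) : gchoose α 0 = 1 := by simp [gchoose]

lemma gchoose_succ_shift (α : ℝ) (j : ℕ) :
    gchoose (α+1) (j+1) = (α+1) * gchoose α j / ((j:ℝ)+1) := by
  unfold gchoose
  rw [Finset.prod_range_succ']
  rw [Finset.prod_congr rfl (by intro i hi; push_cast; ring :
    ∀ i ∈ Finset.range j, (α + 1 - ((i+1:ℕ):ℝ)) = α - (i:ℝ))]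
  rw [Nat.factorial_succ]
  push_cast
  have h1 : (j.factorial : ℝ) ≠ 0 := by positivity
  field_simp
  ring

lemma gchoose_succ' (α : ℝ) (j : ℕ) :
    gchoose α (j+1) = gchoose α j * (α - j) / ((j:ℝ)+1) := by
  unfold gchoose
  rw [Finset.prod_range_succ, Nat.factorial_succ]
  push_cast
  have h1 : (j.factorial : ℝ) ≠ 0 := by positivity
  field_simp

lemma NA (r j : ℕ) (hr : 1 ≤ r) (hj : j ≤ r) :
    ((r:ℝ)+1) * ((2*r-j).choose r : ℝ)
      = (2*(r:ℝ)+1) * ((2*r-1-j).choose r : ℝ) + ((j:ℝ)+1) * ((2*r-1-j).choose (r-1) : ℝ) := by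
  obtain ⟨s, rfl⟩ : ∃ s, r = s+1 := ⟨r-1, by omega⟩
  have e1 : 2*(s+1)-j = (2*(s+1)-1-j)+1 := by omega
  have e2 : s+1-1 = s := by omega
  rw [e1, e2]
  have h1 : (((2*(s+1)-1-j)+1).choose (s+1) : ℝ)
      = ((2*(s+1)-1-j).choose s : ℝ) + ((2*(s+1)-1-j).choose (s+1) : ℝ) := by
    rw [Nat.choose_succ_succ]; push_cast; ring
  have h2 : ((2*(s+1)-1-j).choose (s+1) : ℝ) * ((s:ℝ)+1)
      = ((2*(s+1)-1-j).choose s : ℝ) * (((s:ℝ)+1)-(j:ℝ)) := by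
    have h := Nat.choose_succ_right_eq (2*(s+1)-1-j) s
    have e3 : 2*(s+1)-1-j-s = s+1-j := by omega
    rw [e3] at h
    have h' : ((2*(s+1)-1-j).choose (s+1) * (s+1) : ℝ)
        = ((2*(s+1)-1-j).choose s : ℝ) * ((s+1-j : ℕ) : ℝ) := by exact_mod_cast h
    rw [Nat.cast_sub hj] at h'
    push_cast at h' ⊢
    linarith [h']
  push_cast at h1 h2 ⊢
  linear_combination ((s:ℝ)+2) * h1 - h2

lemma NB (r j : ℕ) (hr : 1 ≤ r) (hj : j ≤ 2*r-1) :
    ((r:ℝ)+1) * ((2*r-j).choose (r+1) : ℝ) = ((2*(r:ℝ)-(j:ℝ))) * ((2*r-1-j).choose r : ℝ) := by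
  have h := Nat.add_one_mul_choose_eq (2*r-1-j) r
  have e1 : (2*r-1-j) + 1 = 2*r-j := by omega
  rw [e1] at h
  have h' : (((2*r-j) : ℕ) : ℝ) * ((2*r-1-j).choose r : ℝ)
      = ((2*r-j).choose (r+1) : ℝ) * ((r:ℝ)+1) := by exact_mod_cast h
  rw [Nat.cast_sub (show j ≤ 2*r by omega)] at h'
  push_cast at h' ⊢
  linarith [h']

lemma N2A (r j : ℕ) (hj : j ≤ 2*r) :
    ((r:ℝ)+1) * ((2*r+1-j).choose (r+1) : ℝ) = (2*(r:ℝ)+1-(j:ℝ)) * ((2*r-j).choose r : ℝ) := by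
  have h := Nat.add_one_mul_choose_eq (2*r-j) r
  have e1 : (2*r-j) + 1 = 2*r+1-j := by omega
  rw [e1] at h
  have h' : (((2*r+1-j) : ℕ) : ℝ) * ((2*r-j).choose r : ℝ)
      = ((2*r+1-j).choose (r+1) : ℝ) * ((r:ℝ)+1) := by exact_mod_cast h
  rw [Nat.cast_sub (show j ≤ 2*r+1 by omega)] at h'
  push_cast at h' ⊢
  linarith [h']

lemma N2B (r j : ℕ) (hj : j ≤ r) :
    ((r:ℝ)+1) * ((2*r+1-j).choose (r+1) : ℝ)
      = 2*((r:ℝ)+1) * ((2*r-j).choose (r+1) : ℝ) + ((j:ℝ)+1) * ((2*r-j).choose r : ℝ) := by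
  have h1 : ((2*r+1-j).choose (r+1) : ℝ)
      = ((2*r-j).choose r : ℝ) + ((2*r-j).choose (r+1) : ℝ) := by
    have e1 : 2*r+1-j = (2*r-j)+1 := by omega
    rw [e1, Nat.choose_succ_succ]
    push_cast; ring
  have h2 : ((2*r-j).choose (r+1) : ℝ) * ((r:ℝ)+1) = ((2*r-j).choose r : ℝ) * ((r:ℝ)-(j:ℝ)) := by
    have h := Nat.choose_succ_right_eq (2*r-j) r
    have e3 : 2*r-j-r = r-j := by omega
    rw [e3] at h
    have h' : ((2*r-j).choose (r+1) : ℝ) * ((r:ℝ)+1)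
        = ((2*r-j).choose r : ℝ) * ((r-j : ℕ) : ℝ) := by exact_mod_cast h
    rw [Nat.cast_sub hj] at h'
    exact h'
  linear_combination ((r:ℝ)+1) * h1 - h2

lemma N0a (r : ℕ) : (2*(r:ℝ)+1) * ((2*r).choose r : ℝ) = ((r:ℝ)+1) * ((2*r+1).choose r : ℝ) := by
  have h := Nat.add_one_mul_choose_eq (2*r) r
  have hs : (2*r+1).choose (r+1) = (2*r+1).choose r := by
    have h2 := Nat.choose_symm (show r+1 ≤ 2*r+1 by omega)
    have e : 2*r+1-(r+1) = r := by omega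
    rw [e] at h2; exact h2.symm
  rw [hs] at h
  have h' : (2*(r:ℝ)+1) * ((2*r).choose r : ℝ) = ((2*r+1).choose r : ℝ) * ((r:ℝ)+1) := by
    exact_mod_cast h
  linarith [h']

lemma N0a' (r : ℕ) :
    (2*(r:ℝ)+1) * ((2*r).choose r : ℝ) = ((r:ℝ)+1) * ((2*r+1).choose (r+1) : ℝ) := by
  have h := Nat.add_one_mul_choose_eq (2*r) r
  have h' : (2*(r:ℝ)+1) * ((2*r).choose r : ℝ) = ((2*r+1).choose (r+1) : ℝ) * ((r:ℝ)+1) := by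
    exact_mod_cast h
  linarith [h']

lemma N0b (r : ℕ) : ((2*r+2).choose (r+1) : ℝ) = 2 * ((2*r+1).choose r : ℝ) := by
  have h1 : (2*r+2).choose (r+1) = (2*r+1).choose r + (2*r+1).choose (r+1) :=
    Nat.choose_succ_succ (2*r+1) r
  have hs : (2*r+1).choose (r+1) = (2*r+1).choose r := by
    have h2 := Nat.choose_symm (show r+1 ≤ 2*r+1 by omega)
    have e : 2*r+1-(r+1) = r := by omega
    rw [e] at h2; exact h2.symm
  rw [hs] at h1
  rw [h1]; push_cast; ring

lemma N0b' (r : ℕ) : ((2*r+2).choose (r+1) : ℝ) = 2 * ((2*r+1).choose (r+1) : ℝ) := by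
  have hs : (2*r+1).choose (r+1) = (2*r+1).choose r := by
    have h2 := Nat.choose_symm (show r+1 ≤ 2*r+1 by omega)
    have e : 2*r+1-(r+1) = r := by omega
    rw [e] at h2; exact h2.symm
  rw [hs]; exact N0b r

/-! ### Coefficient identities -/

lemma IA' (r j : ℕ) (hr : 1 ≤ r) (hj : j ≤ r) :
    ((r:ℝ)+1) * (gchoose ((r:ℝ)+1/4) (j+1) * ((2*r-j).choose r : ℝ))
      = (2*(r:ℝ)+1) * (gchoose ((r:ℝ)+1/4) (j+1) * ((2*r-1-j).choose r : ℝ))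
        + ((4*(r:ℝ)+1)/4) * (gchoose ((r:ℝ)-3/4) j * ((2*r-1-j).choose (r-1) : ℝ)) := by
  have e : (r:ℝ)+1/4 = ((r:ℝ)-3/4)+1 := by ring
  rw [e, gchoose_succ_shift]
  have hj1 : ((j:ℝ)+1) ≠ 0 := by positivity
  have hinv : ((j:ℝ)+1) * ((j:ℝ)+1)⁻¹ = 1 := mul_inv_cancel₀ hj1
  have h := NA r j hr hj
  set G := gchoose ((r:ℝ)-3/4) j with hG
  linear_combination (((r:ℝ)+1/4) * G * ((j:ℝ)+1)⁻¹) * h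
    + (((r:ℝ)+1/4) * G * ((2*r-1-j).choose (r-1) : ℝ)) * hinv

lemma IB' (r j : ℕ) (hr : 1 ≤ r) (hj : j+1 ≤ r) :
    ((r:ℝ)+1) * (gchoose ((r:ℝ)+3/4) (j+1) * ((2*r-j).choose (r+1) : ℝ))
      = (2*(r:ℝ)+1) * (gchoose ((r:ℝ)-1/4) (j+1) * ((2*r-1-j).choose r : ℝ))
        + ((4*(r:ℝ)+1)/4) * (gchoose ((r:ℝ)-1/4) j * ((2*r-1-j).choose r : ℝ)) := by
  have e : (r:ℝ)+3/4 = ((r:ℝ)-1/4)+1 := by ring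
  rw [e, gchoose_succ_shift, gchoose_succ']
  have hj1 : ((j:ℝ)+1) ≠ 0 := by positivity
  have hinv : ((j:ℝ)+1) * ((j:ℝ)+1)⁻¹ = 1 := mul_inv_cancel₀ hj1
  have h := NB r j hr (by omega)
  set G := gchoose ((r:ℝ)-1/4) j with hG
  linear_combination (((r:ℝ)+3/4) * G * ((j:ℝ)+1)⁻¹) * h
    + (((r:ℝ)+1/4) * G * ((2*r-1-j).choose r : ℝ)) * hinv

lemma I2A' (r j : ℕ) (hj : j ≤ r) :
    4*((r:ℝ)+1) * (gchoose ((r:ℝ)+5/4) (j+1) * ((2*r+1-j).choose (r+1) : ℝ))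
      = 8*((r:ℝ)+1) * (gchoose ((r:ℝ)+1/4) (j+1) * ((2*r-j).choose r : ℝ))
        + (4*(r:ℝ)+3) * (gchoose ((r:ℝ)+1/4) j * ((2*r-j).choose r : ℝ)) := by
  have e : (r:ℝ)+5/4 = ((r:ℝ)+1/4)+1 := by ring
  rw [e, gchoose_succ_shift, gchoose_succ']
  have hj1 : ((j:ℝ)+1) ≠ 0 := by positivity
  have hinv : ((j:ℝ)+1) * ((j:ℝ)+1)⁻¹ = 1 := mul_inv_cancel₀ hj1
  have h := N2A r j (by omega)
  set G := gchoose ((r:ℝ)+1/4) j with hG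
  linear_combination ((4*(r:ℝ)+5) * G * ((j:ℝ)+1)⁻¹) * h
    + ((4*(r:ℝ)+3) * G * ((2*r-j).choose r : ℝ)) * hinv

lemma I2B' (r j : ℕ) (hj : j ≤ r) :
    4*((r:ℝ)+1) * (gchoose ((r:ℝ)+3/4) (j+1) * ((2*r+1-j).choose (r+1) : ℝ))
      = 8*((r:ℝ)+1) * (gchoose ((r:ℝ)+3/4) (j+1) * ((2*r-j).choose (r+1) : ℝ))
        + (4*(r:ℝ)+3) * (gchoose ((r:ℝ)-1/4) j * ((2*r-j).choose r : ℝ)) := by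
  have e : (r:ℝ)+3/4 = ((r:ℝ)-1/4)+1 := by ring
  rw [e, gchoose_succ_shift]
  have hj1 : ((j:ℝ)+1) ≠ 0 := by positivity
  have hinv : ((j:ℝ)+1) * ((j:ℝ)+1)⁻¹ = 1 := mul_inv_cancel₀ hj1
  have h := N2B r j hj
  set G := gchoose ((r:ℝ)-1/4) j with hG
  linear_combination ((4*(r:ℝ)+3) * G * ((j:ℝ)+1)⁻¹) * h
    + ((4*(r:ℝ)+3) * G * ((2*r-j).choose r : ℝ)) * hinv

/-! ### Sum manipulation -/

lemma sum_split (n : ℕ) (f g h : ℕ → ℂ) (z : ℂ)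
    (h0 : f 0 = g 0)
    (hstep : ∀ j ∈ Finset.range n, f (j+1) = g (j+1) + h j) :
    ∑ m ∈ Finset.range (n+1), f m * (-z)^m
      = (∑ m ∈ Finset.range (n+1), g m * (-z)^m) + (-z) * ∑ j ∈ Finset.range n, h j * (-z)^j := by
  rw [Finset.sum_range_succ' (fun m => f m * (-z)^m), Finset.sum_range_succ' (fun m => g m * (-z)^m),
    Finset.mul_sum]
  have hc : ∀ j ∈ Finset.range n, f (j+1) * (-z)^(j+1)
      = g (j+1) * (-z)^(j+1) + (-z) * (h j * (-z)^j) := by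
    intro j hj; rw [hstep j hj]; ring
  rw [Finset.sum_congr rfl hc, Finset.sum_add_distrib, h0]
  ring

/-! ### Contiguous recurrences -/

lemma recA (r : ℕ) (hr : 1 ≤ r) (z : ℂ) :
    ((r:ℂ)+1) * padeA (r+1) 1 z
      = (2*(r:ℂ)+1) * padeA r 0 z + ((4*(r:ℂ)+1)/4) * ((-z) * padeA r 1 z) := by
  have h0 : ((r:ℂ)+1) * ((gchoose ((r:ℝ)+1/4) 0 * ((2*(r+1)-1-0).choose r : ℝ) : ℝ) : ℂ)
      = (2*(r:ℂ)+1) * ((gchoose ((r:ℝ)+1/4) 0 * ((2*r-0).choose r : ℝ) : ℝ) : ℂ) := by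
    simp only [gchoose_zero', one_mul]
    rw [show 2*(r+1)-1-0 = 2*r+1 by omega, show 2*r-0 = 2*r by omega]
    have hc := congrArg Complex.ofReal (N0a r)
    push_cast at hc ⊢
    linear_combination -hc
  have hstep : ∀ j ∈ Finset.range (r+1),
      ((r:ℂ)+1) * ((gchoose ((r:ℝ)+1/4) (j+1) * ((2*(r+1)-1-(j+1)).choose r : ℝ) : ℝ) : ℂ)
        = (2*(r:ℂ)+1) * ((gchoose ((r:ℝ)+1/4) (j+1) * ((2*r-(j+1)).choose r : ℝ) : ℝ) : ℂ)
          + ((4*(r:ℂ)+1)/4) * ((gchoose ((r:ℝ)-3/4) j * ((2*r-1-j).choose (r-1) : ℝ) : ℝ) : ℂ) := by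
    intro j hj
    rw [show 2*(r+1)-1-(j+1) = 2*r-j by omega, show 2*r-(j+1) = 2*r-1-j by omega]
    have hc := congrArg Complex.ofReal (IA' r j hr (by simp at hj; omega))
    push_cast at hc ⊢
    linear_combination hc
  have key := sum_split (r+1)
    (fun i => ((r:ℂ)+1) * ((gchoose ((r:ℝ)+1/4) i * ((2*(r+1)-1-i).choose r : ℝ) : ℝ) : ℂ))
    (fun i => (2*(r:ℂ)+1) * ((gchoose ((r:ℝ)+1/4) i * ((2*r-i).choose r : ℝ) : ℝ) : ℂ))
    (fun j => ((4*(r:ℂ)+1)/4) * ((gchoose ((r:ℝ)-3/4) j * ((2*r-1-j).choose (r-1) : ℝ) : ℝ) : ℂ))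
    z h0 hstep
  calc ((r:ℂ)+1) * padeA (r+1) 1 z
      = ∑ i ∈ Finset.range (r+1+1),
          (((r:ℂ)+1) * ((gchoose ((r:ℝ)+1/4) i * ((2*(r+1)-1-i).choose r : ℝ) : ℝ) : ℂ)) * (-z)^i := by
        rw [padeA, Finset.mul_sum]
        simp only [show ((r+1:ℕ):ℝ) - ((1:ℕ):ℝ) + 1/4 = (r:ℝ)+1/4 by push_cast; ring,
          show r+1-1 = r by omega]
        exact Finset.sum_congr rfl fun i _ => by ring
    _ = (∑ i ∈ Finset.range (r+1+1),
          ((2*(r:ℂ)+1) * ((gchoose ((r:ℝ)+1/4) i * ((2*r-i).choose r : ℝ) : ℝ) : ℂ)) * (-z)^i)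
        + (-z) * ∑ j ∈ Finset.range (r+1),
          (((4*(r:ℂ)+1)/4) * ((gchoose ((r:ℝ)-3/4) j * ((2*r-1-j).choose (r-1) : ℝ) : ℝ) : ℂ)) * (-z)^j := key
    _ = (2*(r:ℂ)+1) * padeA r 0 z + ((4*(r:ℂ)+1)/4) * ((-z) * padeA r 1 z) := by
        congr 1
        · rw [Finset.sum_range_succ, show 2*r-(r+1) = r-1 by omega,
            Nat.choose_eq_zero_of_lt (show r-1 < r by omega)]
          rw [padeA, Finset.mul_sum]
          simp only [Nat.cast_zero, Nat.sub_zero, sub_zero, Nat.cast_ofNat, mul_zero, zero_mul,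
            add_zero, Complex.ofReal_zero]
          exact Finset.sum_congr rfl fun i _ => by ring
        · rw [padeA, Finset.mul_sum, Finset.mul_sum, Finset.mul_sum]
          simp only [show ((r:ℕ):ℝ) - ((1:ℕ):ℝ) + 1/4 = (r:ℝ)-3/4 by push_cast; ring]
          exact Finset.sum_congr rfl fun j _ => by ring

lemma recB (r : ℕ) (hr : 1 ≤ r) (z : ℂ) :
    ((r:ℂ)+1) * padeB (r+1) 1 z
      = (2*(r:ℂ)+1) * padeB r 0 z + ((4*(r:ℂ)+1)/4) * ((-z) * padeB r 1 z) := by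
  have h0 : ((r:ℂ)+1) * ((gchoose ((r:ℝ)+3/4) 0 * ((2*(r+1)-1-0).choose (r+1) : ℝ) : ℝ) : ℂ)
      = (2*(r:ℂ)+1) * ((gchoose ((r:ℝ)-1/4) 0 * ((2*r-0).choose r : ℝ) : ℝ) : ℂ) := by
    simp only [gchoose_zero', one_mul]
    rw [show 2*(r+1)-1-0 = 2*r+1 by omega, show 2*r-0 = 2*r by omega]
    have hc := congrArg Complex.ofReal (N0a' r)
    push_cast at hc ⊢
    linear_combination -hc
  have hstep : ∀ j ∈ Finset.range r,
      ((r:ℂ)+1) * ((gchoose ((r:ℝ)+3/4) (j+1) * ((2*(r+1)-1-(j+1)).choose (r+1) : ℝ) : ℝ) : ℂ)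
        = (2*(r:ℂ)+1) * ((gchoose ((r:ℝ)-1/4) (j+1) * ((2*r-(j+1)).choose r : ℝ) : ℝ) : ℂ)
          + ((4*(r:ℂ)+1)/4) * ((gchoose ((r:ℝ)-1/4) j * ((2*r-1-j).choose r : ℝ) : ℝ) : ℂ) := by
    intro j hj
    rw [show 2*(r+1)-1-(j+1) = 2*r-j by omega, show 2*r-(j+1) = 2*r-1-j by omega]
    have hc := congrArg Complex.ofReal (IB' r j hr (by simp at hj; omega))
    push_cast at hc ⊢
    linear_combination hc
  have key := sum_split r
    (fun i => ((r:ℂ)+1) * ((gchoose ((r:ℝ)+3/4) i * ((2*(r+1)-1-i).choose (r+1) : ℝ) : ℝ) : ℂ))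
    (fun i => (2*(r:ℂ)+1) * ((gchoose ((r:ℝ)-1/4) i * ((2*r-i).choose r : ℝ) : ℝ) : ℂ))
    (fun j => ((4*(r:ℂ)+1)/4) * ((gchoose ((r:ℝ)-1/4) j * ((2*r-1-j).choose r : ℝ) : ℝ) : ℂ))
    z h0 hstep
  calc ((r:ℂ)+1) * padeB (r+1) 1 z
      = ∑ i ∈ Finset.range (r+1),
          (((r:ℂ)+1) * ((gchoose ((r:ℝ)+3/4) i * ((2*(r+1)-1-i).choose (r+1) : ℝ) : ℝ) : ℂ)) * (-z)^i := by
        rw [padeB, Finset.mul_sum]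
        simp only [show ((r+1:ℕ):ℝ) - 1/4 = (r:ℝ)+3/4 by push_cast; ring,
          show r+1-1 = r by omega]
        exact Finset.sum_congr rfl fun i _ => by ring
    _ = (∑ i ∈ Finset.range (r+1),
          ((2*(r:ℂ)+1) * ((gchoose ((r:ℝ)-1/4) i * ((2*r-i).choose r : ℝ) : ℝ) : ℂ)) * (-z)^i)
        + (-z) * ∑ j ∈ Finset.range r,
          (((4*(r:ℂ)+1)/4) * ((gchoose ((r:ℝ)-1/4) j * ((2*r-1-j).choose r : ℝ) : ℝ) : ℂ)) * (-z)^j := key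
    _ = (2*(r:ℂ)+1) * padeB r 0 z + ((4*(r:ℂ)+1)/4) * ((-z) * padeB r 1 z) := by
        congr 1
        · rw [padeB, Finset.mul_sum]
          simp only [Nat.sub_zero]
          exact Finset.sum_congr rfl fun i _ => by ring
        · rw [padeB, show r-1+1 = r by omega, Finset.mul_sum, Finset.mul_sum, Finset.mul_sum]
          exact Finset.sum_congr rfl fun j _ => by ring

lemma rec2A (r : ℕ) (hr : 1 ≤ r) (z : ℂ) :
    4*((r:ℂ)+1) * padeA (r+1) 0 z
      = 8*((r:ℂ)+1) * padeA (r+1) 1 z + (4*(r:ℂ)+3) * ((-z) * padeA r 0 z) := by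
  have h0 : 4*((r:ℂ)+1) * ((gchoose ((r:ℝ)+5/4) 0 * ((2*(r+1)-0).choose (r+1) : ℝ) : ℝ) : ℂ)
      = 8*((r:ℂ)+1) * ((gchoose ((r:ℝ)+1/4) 0 * ((2*(r+1)-1-0).choose r : ℝ) : ℝ) : ℂ) := by
    simp only [gchoose_zero', one_mul]
    rw [show 2*(r+1)-0 = 2*r+2 by omega, show 2*(r+1)-1-0 = 2*r+1 by omega]
    have hc := congrArg Complex.ofReal (N0b r)
    push_cast at hc ⊢
    linear_combination (4*(r:ℂ)+4) * hc
  have hstep : ∀ j ∈ Finset.range (r+1),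
      4*((r:ℂ)+1) * ((gchoose ((r:ℝ)+5/4) (j+1) * ((2*(r+1)-(j+1)).choose (r+1) : ℝ) : ℝ) : ℂ)
        = 8*((r:ℂ)+1) * ((gchoose ((r:ℝ)+1/4) (j+1) * ((2*(r+1)-1-(j+1)).choose r : ℝ) : ℝ) : ℂ)
          + (4*(r:ℂ)+3) * ((gchoose ((r:ℝ)+1/4) j * ((2*r-j).choose r : ℝ) : ℝ) : ℂ) := by
    intro j hj
    rw [show 2*(r+1)-(j+1) = 2*r+1-j by omega, show 2*(r+1)-1-(j+1) = 2*r-j by omega]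
    have hc := congrArg Complex.ofReal (I2A' r j (by simp at hj; omega))
    push_cast at hc ⊢
    linear_combination hc
  have key := sum_split (r+1)
    (fun i => 4*((r:ℂ)+1) * ((gchoose ((r:ℝ)+5/4) i * ((2*(r+1)-i).choose (r+1) : ℝ) : ℝ) : ℂ))
    (fun i => 8*((r:ℂ)+1) * ((gchoose ((r:ℝ)+1/4) i * ((2*(r+1)-1-i).choose r : ℝ) : ℝ) : ℂ))
    (fun j => (4*(r:ℂ)+3) * ((gchoose ((r:ℝ)+1/4) j * ((2*r-j).choose r : ℝ) : ℝ) : ℂ))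
    z h0 hstep
  calc 4*((r:ℂ)+1) * padeA (r+1) 0 z
      = ∑ i ∈ Finset.range (r+1+1),
          (4*((r:ℂ)+1) * ((gchoose ((r:ℝ)+5/4) i * ((2*(r+1)-i).choose (r+1) : ℝ) : ℝ) : ℂ)) * (-z)^i := by
        rw [padeA, Finset.mul_sum]
        simp only [Nat.sub_zero, Nat.cast_zero, sub_zero,
          show ((r+1:ℕ):ℝ) + 1/4 = (r:ℝ)+5/4 by push_cast; ring]
        exact Finset.sum_congr rfl fun i _ => by ring
    _ = (∑ i ∈ Finset.range (r+1+1),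
          (8*((r:ℂ)+1) * ((gchoose ((r:ℝ)+1/4) i * ((2*(r+1)-1-i).choose r : ℝ) : ℝ) : ℂ)) * (-z)^i)
        + (-z) * ∑ j ∈ Finset.range (r+1),
          ((4*(r:ℂ)+3) * ((gchoose ((r:ℝ)+1/4) j * ((2*r-j).choose r : ℝ) : ℝ) : ℂ)) * (-z)^j := key
    _ = 8*((r:ℂ)+1) * padeA (r+1) 1 z + (4*(r:ℂ)+3) * ((-z) * padeA r 0 z) := by
        congr 1
        · rw [padeA, Finset.mul_sum]
          simp only [show ((r+1:ℕ):ℝ) - ((1:ℕ):ℝ) + 1/4 = (r:ℝ)+1/4 by push_cast; ring,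
            show r+1-1 = r by omega]
          exact Finset.sum_congr rfl fun i _ => by ring
        · rw [padeA, Finset.mul_sum, Finset.mul_sum, Finset.mul_sum]
          simp only [Nat.sub_zero, Nat.cast_zero, sub_zero]
          exact Finset.sum_congr rfl fun j _ => by ring

lemma rec2B (r : ℕ) (hr : 1 ≤ r) (z : ℂ) :
    4*((r:ℂ)+1) * padeB (r+1) 0 z
      = 8*((r:ℂ)+1) * padeB (r+1) 1 z + (4*(r:ℂ)+3) * ((-z) * padeB r 0 z) := by
  have h0 : 4*((r:ℂ)+1) * ((gchoose ((r:ℝ)+3/4) 0 * ((2*(r+1)-0).choose (r+1) : ℝ) : ℝ) : ℂ)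
      = 8*((r:ℂ)+1) * ((gchoose ((r:ℝ)+3/4) 0 * ((2*(r+1)-1-0).choose (r+1) : ℝ) : ℝ) : ℂ) := by
    simp only [gchoose_zero', one_mul]
    rw [show 2*(r+1)-0 = 2*r+2 by omega, show 2*(r+1)-1-0 = 2*r+1 by omega]
    have hc := congrArg Complex.ofReal (N0b' r)
    push_cast at hc ⊢
    linear_combination (4*(r:ℂ)+4) * hc
  have hstep : ∀ j ∈ Finset.range (r+1),
      4*((r:ℂ)+1) * ((gchoose ((r:ℝ)+3/4) (j+1) * ((2*(r+1)-(j+1)).choose (r+1) : ℝ) : ℝ) : ℂ)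
        = 8*((r:ℂ)+1) * ((gchoose ((r:ℝ)+3/4) (j+1) * ((2*(r+1)-1-(j+1)).choose (r+1) : ℝ) : ℝ) : ℂ)
          + (4*(r:ℂ)+3) * ((gchoose ((r:ℝ)-1/4) j * ((2*r-j).choose r : ℝ) : ℝ) : ℂ) := by
    intro j hj
    rw [show 2*(r+1)-(j+1) = 2*r+1-j by omega, show 2*(r+1)-1-(j+1) = 2*r-j by omega]
    have hc := congrArg Complex.ofReal (I2B' r j (by simp at hj; omega))
    push_cast at hc ⊢
    linear_combination hc
  have key := sum_split (r+1)
    (fun i => 4*((r:ℂ)+1) * ((gchoose ((r:ℝ)+3/4) i * ((2*(r+1)-i).choose (r+1) : ℝ) : ℝ) : ℂ))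
    (fun i => 8*((r:ℂ)+1) * ((gchoose ((r:ℝ)+3/4) i * ((2*(r+1)-1-i).choose (r+1) : ℝ) : ℝ) : ℂ))
    (fun j => (4*(r:ℂ)+3) * ((gchoose ((r:ℝ)-1/4) j * ((2*r-j).choose r : ℝ) : ℝ) : ℂ))
    z h0 hstep
  calc 4*((r:ℂ)+1) * padeB (r+1) 0 z
      = ∑ i ∈ Finset.range (r+1+1),
          (4*((r:ℂ)+1) * ((gchoose ((r:ℝ)+3/4) i * ((2*(r+1)-i).choose (r+1) : ℝ) : ℝ) : ℂ)) * (-z)^i := by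
        rw [padeB, Finset.mul_sum]
        simp only [Nat.sub_zero, show ((r+1:ℕ):ℝ) - 1/4 = (r:ℝ)+3/4 by push_cast; ring]
        exact Finset.sum_congr rfl fun i _ => by ring
    _ = (∑ i ∈ Finset.range (r+1+1),
          (8*((r:ℂ)+1) * ((gchoose ((r:ℝ)+3/4) i * ((2*(r+1)-1-i).choose (r+1) : ℝ) : ℝ) : ℂ)) * (-z)^i)
        + (-z) * ∑ j ∈ Finset.range (r+1),
          ((4*(r:ℂ)+3) * ((gchoose ((r:ℝ)-1/4) j * ((2*r-j).choose r : ℝ) : ℝ) : ℂ)) * (-z)^j := key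
    _ = 8*((r:ℂ)+1) * padeB (r+1) 1 z + (4*(r:ℂ)+3) * ((-z) * padeB r 0 z) := by
        congr 1
        · rw [Finset.sum_range_succ, show 2*(r+1)-1-(r+1) = r by omega,
            Nat.choose_eq_zero_of_lt (show r < r+1 by omega)]
          rw [padeB, show r+1-1 = r by omega, Finset.mul_sum]
          simp only [Nat.cast_zero, mul_zero, zero_mul, add_zero, Complex.ofReal_zero,
            show ((r+1:ℕ):ℝ) - 1/4 = (r:ℝ)+3/4 by push_cast; ring]
          exact Finset.sum_congr rfl fun i _ => by ring
        · rw [padeB, Finset.mul_sum, Finset.mul_sum, Finset.mul_sum]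
          simp only [Nat.sub_zero]
          exact Finset.sum_congr rfl fun j _ => by ring

/-! ### Determinant relations -/

lemma step1 (r : ℕ) (hr : 1 ≤ r) (z : ℂ) :
    ((r:ℂ)+1) * (padeA r 0 z * padeB (r+1) 1 z - padeA (r+1) 1 z * padeB r 0 z)
      = ((4*(r:ℂ)+1)/4) * (-z) * (padeA r 0 z * padeB r 1 z - padeA r 1 z * padeB r 0 z) := by
  linear_combination padeA r 0 z * recB r hr z - padeB r 0 z * recA r hr z

lemma step2 (r : ℕ) (hr : 1 ≤ r) (z : ℂ) :
    4*((r:ℂ)+1) * (padeA (r+1) 0 z * padeB (r+1) 1 z - padeA (r+1) 1 z * padeB (r+1) 0 z)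
      = (4*(r:ℂ)+3) * (-z) * (padeA r 0 z * padeB (r+1) 1 z - padeA (r+1) 1 z * padeB r 0 z) := by
  linear_combination padeB (r+1) 1 z * rec2A r hr z - padeA (r+1) 1 z * rec2B r hr z

lemma base_case (z : ℂ) :
    padeA 1 0 z * padeB 1 1 z - padeA 1 1 z * padeB 1 0 z = -(3/16) * z^2 := by
  simp only [padeA, padeB, gchoose]
  norm_num [Finset.sum_range_succ, Finset.prod_range_succ]
  ring

lemma d0_ne (r : ℕ) (hr : 1 ≤ r) (z : ℂ) (hz : z ≠ 0) :
    padeA r 0 z * padeB r 1 z - padeA r 1 z * padeB r 0 z ≠ 0 := by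
  induction r, hr using Nat.le_induction with
  | base =>
    rw [base_case]
    exact mul_ne_zero (by norm_num) (pow_ne_zero 2 hz)
  | succ n hn ih =>
    have h1 := step1 n hn z
    have h2 := step2 n hn z
    have hn1 : ((n:ℂ)+1) ≠ 0 := by exact_mod_cast Nat.succ_ne_zero n
    have hc3 : (4*(n:ℂ)+3) ≠ 0 := by exact_mod_cast (show ((4*n+3 : ℕ) : ℂ) ≠ 0 by exact_mod_cast (by omega : (4*n+3 : ℕ) ≠ 0))
    have hc1 : ((4*(n:ℂ)+1)/4) ≠ 0 := by
      apply div_ne_zero _ (by norm_num)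
      exact_mod_cast (show ((4*n+1 : ℕ) : ℂ) ≠ 0 by exact_mod_cast (by omega : (4*n+1 : ℕ) ≠ 0))
    have hd1 : padeA n 0 z * padeB (n+1) 1 z - padeA (n+1) 1 z * padeB n 0 z ≠ 0 := by
      intro h
      rw [h, mul_zero] at h1
      exact (mul_ne_zero (mul_ne_zero hc1 (neg_ne_zero.mpr hz)) ih) h1.symm
    intro h
    rw [h, mul_zero] at h2
    exact (mul_ne_zero (mul_ne_zero hc3 (neg_ne_zero.mpr hz)) hd1) h2.symm

lemma d1_ne (r : ℕ) (hr : 1 ≤ r) (z : ℂ) (hz : z ≠ 0) :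
    padeA r 0 z * padeB (r+1) 1 z - padeA (r+1) 1 z * padeB r 0 z ≠ 0 := by
  have h1 := step1 r hr z
  have hc1 : ((4*(r:ℂ)+1)/4) ≠ 0 := by
    apply div_ne_zero _ (by norm_num)
    exact_mod_cast (show ((4*r+1 : ℕ) : ℂ) ≠ 0 by exact_mod_cast (by omega : (4*r+1 : ℕ) ≠ 0))
  intro h
  rw [h, mul_zero] at h1
  exact (mul_ne_zero (mul_ne_zero hc1 (neg_ne_zero.mpr hz)) (d0_ne r hr z hz)) h1.symm

/-- Lemma 2.2 (iii): for `z ≠ 0` and `h ∈ {0,1}`,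
`A_{r,0}(z)·B_{r+h,1}(z) ≠ A_{r+h,1}(z)·B_{r,0}(z)`. -/
theorem pade_nonvanishing
    (r h : ℕ) (hr : 1 ≤ r) (hh : h = 0 ∨ h = 1)
    (z : ℂ) (hz : z ≠ 0) :
    padeA r 0 z * padeB (r + h) 1 z ≠ padeA (r + h) 1 z * padeB r 0 z := by
  rcases hh with rfl | rfl
  · simp only [Nat.add_zero]
    exact sub_ne_zero.mp (d0_ne r hr z hz)
  · exact sub_ne_zero.mp (d1_ne r hr z hz)
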